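/- For all N ≥ 0, the continued fraction denominators satisfy q_{2N−1} = x_{N+1}/x_N − 1 and q_{2N} = x_{N+1}. -/

import Mathlib

/-- for all `N ≥ 0` the continued fraction denominators satisfy
`q_{2N-1} = x (N+1) / x N - 1` and `q_{2N} = x (N+1)`.  Here `q` is indexed with a shift,
so that `q (m+1)` is the denominator `q_m` of the `m`-th convergent, and `q 0 = q_{-1} = 0`. -/
theorem stmt_3 (F : Polynomial ℤ)
    (hFnonneg : ∀ i, 0 ≤ F.coeff i) (hF0 : F.coeff 0 = 1) (hFdeg : 1 ≤ F.natDegree)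
    (x : ℕ → ℚ) (hxpos : ∀ n, 0 < x n) (hx0 : x 0 = 1) (hx1 : x 1 = 1)
    (hrec : ∀ n, x (n + 2) * x n = (x (n + 1)) ^ 2 * Polynomial.aeval (x (n + 1)) F)
    (a : ℕ → ℚ)
    (haeven : ∀ n, a (2 * n) = x n)
    (haodd : ∀ n, a (2 * n + 1) = (Polynomial.aeval (x (n + 1)) F - 1) / x n)
    (p q : ℕ → ℚ)
    (hp0 : p 0 = 1) (hp1 : p 1 = a 0) (hq0 : q 0 = 0) (hq1 : q 1 = 1)
    (hp : ∀ n, p (n + 2) = a (n + 1) * p (n + 1) + p n)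
    (hq : ∀ n, q (n + 2) = a (n + 1) * q (n + 1) + q n) :
    ∀ N : ℕ, q (2 * N) = x (N + 1) / x N - 1 ∧ q (2 * N + 1) = x (N + 1) := by
  intro N
  induction N with
  | zero => constructor <;> simp [hq0, hq1, hx0, hx1]
  | succ N ih =>
    obtain ⟨h1, h2⟩ := ih
    have hxN := (hxpos N).ne'
    have hxN1 := (hxpos (N + 1)).ne'
    have hr := hrec N
    have e1 : q (2 * (N + 1)) = x (N + 2) / x (N + 1) - 1 := by
      have h2n : 2 * (N + 1) = 2 * N + 2 := by ring
      rw [h2n, hq, haodd N, h1, h2]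
      field_simp
      linear_combination -hr
    refine ⟨e1, ?_⟩
    have h2n : 2 * (N + 1) + 1 = (2 * N + 1) + 2 := by ring
    rw [h2n, hq, show 2 * N + 1 + 1 = 2 * (N + 1) by ring, haeven (N + 1), e1, h2,
      show N + 1 + 1 = N + 2 from rfl]
    field_simp
    ring
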